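/- For every integer $d \ge 1$, the identity $\sum_{t=0}^{d} \dfrac{v^{(1-d)t} \prod_{j=t+1}^{d}(v^j + v^{-j})}{[d-t]!} (v - v^{-1})^{t} = \dfrac{2 v^{d} \prod_{j=1}^{d-1}(v^{j}+v^{-j})}{[d]!}$ holds in $\mathbb{Q}(v)$. -/

import Mathlib

noncomputable section

abbrev K : Type := RatFunc ℚ

/-- The indeterminate `v` in `ℚ(v)`. -/
def v : K := RatFunc.X

/-- Quantum integer `[m] = (v^m - v^{-m})/(v - v^{-1})`. -/
def qint (m : ℤ) : K := (v ^ m - v ^ (-m)) / (v - v⁻¹)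

/-- Quantum factorial `[r]! = ∏_{i=1}^r [i]`. -/
def qfact (r : ℕ) : K := ∏ i ∈ Finset.range r, qint ((i : ℤ) + 1)

/-- Quantum double factorial `[2r]!! = ∏_{i=1}^r [2i]`. -/
def qdfact (r : ℕ) : K := ∏ i ∈ Finset.range r, qint (2 * ((i : ℤ) + 1))

/-- Balanced Gaussian binomial coefficient `[m][m-1]⋯[m-r+1]/[r]!`. -/
def qbinom (m : ℤ) (r : ℕ) : K := (∏ i ∈ Finset.range r, qint (m - (i : ℤ))) / qfact r

/-- Gaussian binomial with integer lower index, vanishing for negative lower index. -/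
def qbinomZ (m r : ℤ) : K := if 0 ≤ r then qbinom m r.toNat else 0

lemma hv0 : v ≠ 0 := RatFunc.X_ne_zero

lemma v_pow_eq (n : ℕ) : v ^ n = algebraMap (Polynomial ℚ) K (Polynomial.X ^ n) := by
  rw [map_pow, RatFunc.algebraMap_X, v]

lemma vpow_ne_neg_one (n : ℕ) (hn : 1 ≤ n) : v ^ n + 1 ≠ 0 := by
  rw [v_pow_eq]; intro h
  have h2 : algebraMap (Polynomial ℚ) K (Polynomial.X ^ n + 1) = 0 := by simpa [map_add] using h
  rw [map_eq_zero_iff _ (RatFunc.algebraMap_injective ℚ)] at h2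
  have := congrArg (Polynomial.eval 0) h2
  simp [zero_pow (by omega : n ≠ 0)] at this

lemma vpow_ne_one (n : ℕ) (hn : 1 ≤ n) : v ^ n - 1 ≠ 0 := by
  rw [v_pow_eq]; intro h
  have h2 : algebraMap (Polynomial ℚ) K (Polynomial.X ^ n - 1) = 0 := by simpa [map_sub] using h
  rw [map_eq_zero_iff _ (RatFunc.algebraMap_injective ℚ)] at h2
  have := congrArg (Polynomial.eval 0) h2
  simp [zero_pow (by omega : n ≠ 0)] at this

lemma cs_ne' (m : ℤ) : v ^ m + v ^ (-m) ≠ 0 := by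
  wlog hm : 0 ≤ m with H
  · push_neg at hm
    have := H (-m) (by omega)
    simpa [add_comm] using this
  obtain ⟨n, rfl⟩ := Int.eq_ofNat_of_zero_le hm
  rcases Nat.eq_zero_or_pos n with h | h
  · subst h; intro h2
    simp only [Nat.cast_zero, neg_zero, zpow_zero] at h2
    have h3 : algebraMap (Polynomial ℚ) K (1+1) = 0 := by
      simpa [map_add, map_one] using h2
    rw [map_eq_zero_iff _ (RatFunc.algebraMap_injective ℚ)] at h3
    norm_num at h3
  · have h1 : v ^ (2*n) = v ^ n * v ^ n := by rw [two_mul, pow_add]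
    have : v ^ (n:ℤ) + v ^ (-(n:ℤ)) = (v ^ (2*n) + 1) / v ^ n := by
      rw [zpow_neg, zpow_natCast, h1, add_div, mul_div_assoc,
        div_self (pow_ne_zero _ hv0), mul_one, one_div]
    rw [this]
    exact div_ne_zero (vpow_ne_neg_one _ (by omega)) (pow_ne_zero _ hv0)

lemma sn_ne (m : ℤ) (hm : m ≠ 0) : v ^ m - v ^ (-m) ≠ 0 := by
  wlog hm2 : 0 < m with H
  · intro h
    refine H (-m) (by omega) (by omega) ?_
    rw [neg_neg]
    linear_combination -h
  obtain ⟨n, rfl⟩ := Int.eq_ofNat_of_zero_le hm2.le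
  have h1 : v ^ (2*n) = v ^ n * v ^ n := by rw [two_mul, pow_add]
  have : v ^ (n:ℤ) - v ^ (-(n:ℤ)) = (v ^ (2*n) - 1) / v ^ n := by
    rw [zpow_neg, zpow_natCast, h1, sub_div, mul_div_assoc,
      div_self (pow_ne_zero _ hv0), mul_one, one_div]
  rw [this]
  exact div_ne_zero (vpow_ne_one _ (by omega : 1 ≤ 2*n)) (pow_ne_zero _ hv0)

lemma hvv : v - v⁻¹ ≠ 0 := by
  have : v - v⁻¹ = (v ^ 2 - 1) / v := by
    rw [pow_two, sub_div, mul_div_assoc, div_self hv0, mul_one, one_div]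
  rw [this]
  exact div_ne_zero (vpow_ne_one 2 (by omega)) hv0

lemma qint_ne (m : ℤ) (hm : m ≠ 0) : qint m ≠ 0 :=
  div_ne_zero (sn_ne m hm) hvv

lemma qfact_ne (r : ℕ) : qfact r ≠ 0 :=
  Finset.prod_ne_zero_iff.2 fun i _ => qint_ne _ (by omega)

lemma sn_mul (m : ℤ) : (v - v⁻¹) * qint m = v ^ m - v ^ (-m) := by
  rw [qint, mul_div_cancel₀ _ hvv]

def cs (m : ℤ) : K := v ^ m + v ^ (-m)
def Cp (k : ℕ) : K := ∏ j ∈ Finset.Icc 1 k, cs (j : ℤ)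
def Sp (d : ℤ) (t : ℕ) : K := ∏ i ∈ Finset.range t, (v ^ (d - (i:ℤ)) - v ^ ((i:ℤ) - d))

lemma cs_ne (m : ℤ) : cs m ≠ 0 := cs_ne' m

lemma Cp_ne (k : ℕ) : Cp k ≠ 0 := Finset.prod_ne_zero_iff.2 fun _ _ => cs_ne _

lemma Cp_succ (k : ℕ) : Cp (k+1) = Cp k * cs ((k:ℤ)+1) := by
  rw [Cp, Finset.prod_Icc_succ_top (by omega : 1 ≤ k+1)]
  push_cast
  rfl

lemma Sp_succ (d : ℤ) (t : ℕ) : Sp d (t+1) = Sp d t * (v ^ (d - (t:ℤ)) - v ^ ((t:ℤ) - d)) :=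
  Finset.prod_range_succ _ _

lemma hstep (d : ℤ) (k : ℕ) :
    cs ((k:ℤ)+1) * v ^ (-(d*(k:ℤ))) - cs d * v ^ ((1-d)*((k:ℤ)+1))
      = v ^ (-(d*((k:ℤ)+1))) * (v ^ (d-((k:ℤ)+1)) - v ^ (((k:ℤ)+1)-d)) := by
  have hz : ∀ a b : ℤ, v ^ a * v ^ b = v ^ (a+b) := fun a b => (zpow_add₀ hv0 a b).symm
  simp only [cs, add_mul, mul_sub, hz]
  rw [show (k:ℤ)+1+(-(d*k)) = d+(1-d)*((k:ℤ)+1) from by ring,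
      show -((k:ℤ)+1)+(-(d*k)) = -(d*((k:ℤ)+1))+(d-((k:ℤ)+1)) from by ring,
      show -d+(1-d)*((k:ℤ)+1) = -(d*((k:ℤ)+1))+(((k:ℤ)+1)-d) from by ring]
  ring

lemma key (d : ℤ) (k : ℕ) :
    cs d * Cp k * (∑ t ∈ Finset.range (k+1), v ^ ((1-d) * (t:ℤ)) * Sp d t / Cp t)
      = 2 * v ^ d * Cp k - v ^ (-(d * (k:ℤ))) * Sp d (k+1) := by
  induction k with
  | zero =>
    rw [Finset.sum_range_one]
    norm_num [Sp, Cp, cs, Finset.prod_range_one]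
    ring
  | succ k ih =>
    rw [Finset.sum_range_succ, mul_add]
    have hb : cs d * Cp (k+1) * (v ^ ((1-d) * (((k+1):ℕ):ℤ)) * Sp d (k+1) / Cp (k+1))
        = cs d * (v ^ ((1-d) * (((k+1):ℕ):ℤ)) * Sp d (k+1)) := by
      have h := Cp_ne (k+1)
      field_simp
    rw [hb]
    have h1 : cs d * Cp (k+1) *
        (∑ t ∈ Finset.range (k+1), v ^ ((1-d) * (t:ℤ)) * Sp d t / Cp t)
        = cs ((k:ℤ)+1) *
          (cs d * Cp k * (∑ t ∈ Finset.range (k+1), v ^ ((1-d) * (t:ℤ)) * Sp d t / Cp t)) := by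
      rw [Cp_succ]; ring
    rw [h1, ih, Cp_succ]
    have hs := hstep d k
    have hS := Sp_succ d (k+1)
    push_cast at hs hS ⊢
    linear_combination (-(Sp d (k+1))) * hs + v ^ (-(d * ((k:ℤ)+1))) * hS

lemma factor (d t : ℕ) (ht : t ≤ d) :
    (v - v⁻¹) ^ t * qfact d = qfact (d - t) * Sp (d:ℤ) t := by
  induction t with
  | zero => simp [Sp]
  | succ t ih =>
    have ht' : t ≤ d := by omega
    have hdt : d - t = (d - (t+1)) + 1 := by omega
    have h2 : qfact (d - t) = qfact (d - (t+1)) * qint ((d:ℤ) - t) := by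
      rw [hdt, qfact, Finset.prod_range_succ, ← qfact]
      congr 1
      have : ((d - (t+1) : ℕ) : ℤ) = (d:ℤ) - (t+1) := by omega
      rw [this]
      ring
    calc (v - v⁻¹) ^ (t+1) * qfact d
        = (v - v⁻¹) * ((v - v⁻¹) ^ t * qfact d) := by ring
      _ = (v - v⁻¹) * (qfact (d - t) * Sp (d:ℤ) t) := by rw [ih ht']
      _ = qfact (d - (t+1)) * (((v - v⁻¹) * qint ((d:ℤ) - t)) * Sp (d:ℤ) t) := by
          rw [h2]; ring
      _ = qfact (d - (t+1)) * Sp (d:ℤ) (t+1) := by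
          rw [sn_mul, Sp_succ, show -((d:ℤ) - t) = (t:ℤ) - d from by ring]
          ring

lemma Cp_split (d t : ℕ) (ht : t ≤ d) :
    Cp t * (∏ j ∈ Finset.Icc (t+1) d, cs (j:ℤ)) = Cp d := by
  rw [Cp, Cp, show Finset.Icc 1 t = Finset.Ioc 0 t from Finset.Icc_add_one_left_eq_Ioc 0 t,
    show Finset.Icc 1 d = Finset.Ioc 0 d from Finset.Icc_add_one_left_eq_Ioc 0 d,
    show Finset.Icc (t+1) d = Finset.Ioc t d from Finset.Icc_add_one_left_eq_Ioc t d]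
  exact Finset.prod_Ioc_consecutive _ (Nat.zero_le t) ht

theorem stmt7 (d : ℕ) (hd : 1 ≤ d) :
    ∑ t ∈ Finset.range (d + 1),
      v ^ ((1 - (d : ℤ)) * t) *
        (∏ j ∈ Finset.Icc (t + 1) d, (v ^ (j : ℤ) + v ^ (-(j : ℤ)))) / qfact (d - t) *
        (v - v⁻¹) ^ t
    = 2 * v ^ d *
        (∏ j ∈ Finset.Icc 1 (d - 1), (v ^ (j : ℤ) + v ^ (-(j : ℤ)))) / qfact d := by
  have hterm : ∀ t ∈ Finset.range (d+1),
      v ^ ((1 - (d : ℤ)) * t) *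
        (∏ j ∈ Finset.Icc (t + 1) d, (v ^ (j : ℤ) + v ^ (-(j : ℤ)))) / qfact (d - t) *
        (v - v⁻¹) ^ t
      = (Cp d / qfact d) * (v ^ ((1 - (d:ℤ)) * (t:ℤ)) * Sp (d:ℤ) t / Cp t) := by
    intro t ht
    have ht' : t ≤ d := by
      simp only [Finset.mem_range] at ht; omega
    have hfac := factor d t ht'
    have hcp := Cp_split d t ht'
    simp only [cs] at hcp
    set P := ∏ j ∈ Finset.Icc (t+1) d, (v ^ (j:ℤ) + v ^ (-(j:ℤ))) with hP
    have hne1 := qfact_ne (d - t)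
    have hne2 := qfact_ne d
    have hne3 := Cp_ne t
    field_simp
    rw [show (v ^ 2 - 1) / v = v - v⁻¹ from by rw [sub_div, pow_two, mul_div_assoc, div_self hv0, mul_one, one_div]]
    linear_combination (v ^ ((1 - (d:ℤ)) * (t:ℤ)) * Cp d) * hfac +
      (v ^ ((1 - (d:ℤ)) * (t:ℤ)) * (v - v⁻¹) ^ t * qfact d) * hcp
  rw [Finset.sum_congr rfl hterm, ← Finset.mul_sum]
  have hSp0 : Sp (d:ℤ) (d+1) = 0 := by
    refine Finset.prod_eq_zero (Finset.self_mem_range_succ d) ?_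
    simp
  have hkey := key (d:ℤ) d
  rw [hSp0, mul_zero, sub_zero] at hkey
  have hCd : Cp d = Cp (d-1) * cs (d:ℤ) := by
    obtain ⟨e, rfl⟩ : ∃ e, d = e + 1 := ⟨d-1, by omega⟩
    simp only [Nat.add_sub_cancel]
    rw [Cp_succ]
    push_cast
    rfl
  have h5 : (∑ t ∈ Finset.range (d+1), v ^ ((1-(d:ℤ)) * (t:ℤ)) * Sp (d:ℤ) t / Cp t)
      = 2 * v ^ (d:ℤ) / cs (d:ℤ) := by
    rw [eq_div_iff (cs_ne _)]
    apply mul_left_cancel₀ (Cp_ne d)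
    linear_combination hkey
  rw [h5, hCd]
  have hcs := cs_ne (d:ℤ)
  have hqf := qfact_ne d
  rw [show (v:K) ^ d = v ^ (d:ℤ) from (zpow_natCast v d).symm]
  simp only [Cp, cs] at hcs ⊢
  set Q := ∏ j ∈ Finset.Icc 1 (d-1), (v ^ (j:ℤ) + v ^ (-(j:ℤ))) with hQ
  have hcs2 : (v:K) ^ d + 1 / v ^ d ≠ 0 := by
    rw [one_div, ← zpow_natCast v d, ← zpow_neg]
    exact hcs
  field_simp
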